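/- Let R be a finite principal left ideal ring, L a linear extension of the poset of left ideals of R ordered by inclusion, and < a total order on R obtained by declaring x < y whenever Ry <_L Rx, with an arbitrary total order within each set of generators of a fixed left ideal. Then < is respectful, and moreover for nonzero x, y with Rx ⊋ Ry one has x < uy for all units u. -/
import Mathlib


private lemma span_unit_mul_eq {R : Type*} [Ring R] (u : Rˣ) (y : R) :
    Ideal.span {(u : R) * y} = Ideal.span {y} := by
  apply le_antisymm
  · rw [Ideal.span_le, Set.singleton_subset_iff]
    exact Ideal.mul_mem_left _ _ (Ideal.subset_span rfl)
  · rw [Ideal.span_le, Set.singleton_subset_iff]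
    have h := Ideal.mul_mem_left (Ideal.span {(u : R) * y}) (↑u⁻¹ : R)
      (Ideal.subset_span rfl)
    rwa [← mul_assoc, Units.inv_mul, one_mul] at h

private lemma unit_mul_ne_zero {R : Type*} [Ring R] (u : Rˣ) {y : R} (hy : y ≠ 0) :
    (u : R) * y ≠ 0 := by
  intro h
  apply hy
  have : (↑u⁻¹ : R) * ((u : R) * y) = 0 := by rw [h, mul_zero]
  rwa [← mul_assoc, Units.inv_mul, one_mul] at this

/-- Let `R` be a finite principal left ideal ring, `Lext` a linear extension of the
poset of left ideals ordered by inclusion, and `L` a total order on `R` which respects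
`Lext` (i.e. `Ry <_L Rx` implies `x < y` for nonzero `x, y`; within each set of
generators of a fixed ideal the order is arbitrary).  Then `L` is respectful, and
moreover for nonzero `x, y` with `Rx ⊋ Ry` one has `x < uy` for all units `u`. -/
theorem order_respecting_linear_extension_is_respectful {R : Type*} [Ring R] [Fintype R]
    (hPLIR : ∀ I : Ideal R, ∃ g : R, I = Ideal.span {g})
    (Lext : LinearOrder (Ideal R))
    (hLext : ∀ I J : Ideal R, I < J → Lext.lt I J)
    (L : LinearOrder R)
    (hrespects : ∀ x y : R, x ≠ 0 → y ≠ 0 →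
      Lext.lt (Ideal.span {y}) (Ideal.span {x}) → L.lt x y) :
    (∀ x y : R, x ≠ 0 → y ≠ 0 → Ideal.span {y} < Ideal.span {x} →
      ∃ α : Rˣ, ∀ u : Rˣ, L.lt ((α : R) * x) ((u : R) * y)) ∧
    (∀ x y : R, x ≠ 0 → y ≠ 0 → Ideal.span {y} < Ideal.span {x} →
      ∀ u : Rˣ, L.lt x ((u : R) * y)) := by
  have key : ∀ x y : R, x ≠ 0 → y ≠ 0 → Ideal.span {y} < Ideal.span {x} →
      ∀ u : Rˣ, L.lt x ((u : R) * y) := by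
    intro x y hx hy hlt u
    apply hrespects x ((u : R) * y) hx (unit_mul_ne_zero u hy)
    rw [span_unit_mul_eq]
    exact hLext _ _ hlt
  exact ⟨fun x y hx hy hlt => ⟨1, fun u => by simpa using key x y hx hy hlt u⟩, key⟩
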